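/- Let U be a doubly periodic array of period r₁×r₂ with values in L, and fix a monomial order ≤_T on ℕ×ℕ. Then the set Λ(U) = {f ∈ L[X₁,X₂] : f generates U} (together with the zero polynomial) is an ideal of the polynomial ring L[X₁,X₂]. -/

import Mathlib

/-- A monomial order on ℕ × ℕ: a linear order compatible with addition
for which (0,0) is the least element. -/
structure MonOrd where
  le : ℕ × ℕ → ℕ × ℕ → Prop
  refl : ∀ a, le a a
  trans : ∀ a b c, le a b → le b c → le a c
  antisymm : ∀ a b, le a b → le b a → a = b
  total : ∀ a b, le a b ∨ le b a
  add_right : ∀ a b c, le a b → le (a + c) (b + c)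
  zero_le : ∀ a, le (0, 0) a

/-- Strict version of a monomial order. -/
def MonOrd.lt (T : MonOrd) (a b : ℕ × ℕ) : Prop := T.le a b ∧ a ≠ b

/-- `s` is the leading power product exponent of `f` w.r.t. `T`. -/
def IsLP {L : Type} [Field L] (T : MonOrd) (f : (ℕ × ℕ) →₀ L) (s : ℕ × ℕ) : Prop :=
  s ∈ f.support ∧ ∀ m ∈ f.support, T.le m s

/-- `f[U]_n`, computed with respect to a given leading exponent `s` of `f`. -/
noncomputable def fApp {L : Type} [Field L] (U : ℕ × ℕ → L) (f : (ℕ × ℕ) →₀ L)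
    (s n : ℕ × ℕ) : L :=
  if s.1 ≤ n.1 ∧ s.2 ≤ n.2 then
    ∑ m ∈ f.support, f m * U (m.1 + n.1 - s.1, m.2 + n.2 - s.2)
  else 0

/-- `f` generates the doubly periodic array `U`. -/
def GeneratesU {L : Type} [Field L] (T : MonOrd) (U : ℕ × ℕ → L) (f : (ℕ × ℕ) →₀ L) : Prop :=
  ∃ s, IsLP T f s ∧ ∀ n, fApp U f s n = 0

/-- `f` generates the finite subarray `u^l` of `U`. -/
def GeneratesUpTo {L : Type} [Field L] (T : MonOrd) (U : ℕ × ℕ → L) (l : ℕ × ℕ)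
    (f : (ℕ × ℕ) →₀ L) : Prop :=
  ∃ s, IsLP T f s ∧ ∀ k, s.1 ≤ k.1 → s.2 ≤ k.2 → T.lt k l → fApp U f s k = 0

/-- `U` is a doubly periodic array of period r₁ × r₂. -/
def DoublyPeriodic {L : Type} (r₁ r₂ : ℕ) (U : ℕ × ℕ → L) : Prop :=
  ∀ n m : ℕ × ℕ, n.1 % r₁ = m.1 % r₁ → n.2 % r₂ = m.2 % r₂ → U n = U m

/-- Evaluation of a bivariate polynomial at a point `(x, y)`. -/
noncomputable def polyEval {L : Type} [Field L] (f : (ℕ × ℕ) →₀ L) (x y : L) : L :=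
  ∑ m ∈ f.support, f m * x ^ m.1 * y ^ m.2

/-- The syndrome table afforded by `τ` and `e`:  `u_n = e(α^(τ+n))`. -/
noncomputable def synTable {F L : Type} [Field F] [Field L] [Algebra F L] {r₁ r₂ : ℕ}
    (α₁ α₂ : L) (τ : Fin r₁ × Fin r₂) (e : Fin r₁ × Fin r₂ → F) : ℕ × ℕ → L :=
  fun n => ∑ p : Fin r₁ × Fin r₂,
    algebraMap F L (e p) * (α₁ ^ ((τ.1 : ℕ) + n.1)) ^ (p.1 : ℕ)
      * (α₂ ^ ((τ.2 : ℕ) + n.2)) ^ (p.2 : ℕ)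

/-- The weight ω(e): number of nonzero coefficients. -/
noncomputable def wt {F : Type} [Field F] {r₁ r₂ : ℕ} (e : Fin r₁ × Fin r₂ → F) : ℕ :=
  {p | e p ≠ 0}.ncard

/-- The hyperbolic set B(δ) of amplitude δ inside {0,…,r₁−1} × {0,…,r₂−1}. -/
def hypB (r₁ r₂ δ : ℕ) : Set (ℕ × ℕ) :=
  {l | l.1 < r₁ ∧ l.2 < r₂ ∧ (l.1 + 1) * (l.2 + 1) ≤ δ ∧ l ≠ (δ - 1, 0) ∧ l ≠ (0, δ - 1)}

/-- The border set 𝔉 = {l ∈ B(2t+1) : 2t ≤ (l₁+1)(l₂+1)}. -/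
def frontF (r₁ r₂ t : ℕ) : Set (ℕ × ℕ) :=
  {l ∈ hypB r₁ r₂ (2 * t + 1) | 2 * t ≤ (l.1 + 1) * (l.2 + 1)}

/-- The lexicographic order with X₁ > X₂. -/
def lexMonOrd : MonOrd where
  le a b := a.1 < b.1 ∨ (a.1 = b.1 ∧ a.2 ≤ b.2)
  refl a := by omega
  trans a b c h1 h2 := by omega
  antisymm a b h1 h2 := by
    obtain ⟨a1, a2⟩ := a; obtain ⟨b1, b2⟩ := b
    simp_all only [Prod.mk.injEq]; omega
  total a b := by omega
  add_right a b c h := by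
    obtain ⟨a1, a2⟩ := a; obtain ⟨b1, b2⟩ := b; obtain ⟨c1, c2⟩ := c
    simp_all only [Prod.mk_add_mk]; omega
  zero_le a := by
    obtain ⟨a1, a2⟩ := a; simp only []; omega

/-- The (reverse) graded order with X₂ > X₁. -/
def grMonOrd : MonOrd where
  le a b := a.1 + a.2 < b.1 + b.2 ∨ (a.1 + a.2 = b.1 + b.2 ∧ a.2 ≤ b.2)
  refl a := by omega
  trans a b c h1 h2 := by omega
  antisymm a b h1 h2 := by
    obtain ⟨a1, a2⟩ := a; obtain ⟨b1, b2⟩ := b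
    simp_all only [Prod.mk.injEq]; omega
  total a b := by omega
  add_right a b c h := by
    obtain ⟨a1, a2⟩ := a; obtain ⟨b1, b2⟩ := b; obtain ⟨c1, c2⟩ := c
    simp_all only [Prod.mk_add_mk]; omega
  zero_le a := by
    obtain ⟨a1, a2⟩ := a; simp only []; omega

/-- The ideal (X₁^{r₁} − 1, X₂^{r₂} − 1) of L[X₁,X₂]. -/
noncomputable def periodIdeal (L : Type) [Field L] (r₁ r₂ : ℕ) :
    Ideal (AddMonoidAlgebra L (ℕ × ℕ)) :=
  Ideal.span {AddMonoidAlgebra.single (r₁, 0) 1 - 1, AddMonoidAlgebra.single (0, r₂) 1 - 1}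

/-- The "shifted sum" linear map f ↦ Σ_m f_m · U(m+k). -/
noncomputable def phiU {L : Type} [Field L] (U : ℕ × ℕ → L) (k : ℕ × ℕ) :
    ((ℕ × ℕ) →₀ L) →ₗ[L] L :=
  Finsupp.lsum L fun m => LinearMap.toSpanSingleton L L (U (m.1 + k.1, m.2 + k.2))

lemma phiU_single {L : Type} [Field L] (U : ℕ × ℕ → L) (k a : ℕ × ℕ) (c : L) :
    phiU U k (Finsupp.single a c) = c * U (a.1 + k.1, a.2 + k.2) := by
  simp [phiU, LinearMap.toSpanSingleton_apply, smul_eq_mul]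

lemma phiU_apply {L : Type} [Field L] (U : ℕ × ℕ → L) (k : ℕ × ℕ) (f : (ℕ × ℕ) →₀ L) :
    phiU U k f = ∑ m ∈ f.support, f m * U (m.1 + k.1, m.2 + k.2) := by
  simp [phiU, Finsupp.lsum_apply, Finsupp.sum, LinearMap.toSpanSingleton_apply, smul_eq_mul]

lemma phiU_single_mul {L : Type} [Field L] (U : ℕ × ℕ → L) (k a : ℕ × ℕ) (c : L)
    (f : AddMonoidAlgebra L (ℕ × ℕ)) :
    phiU U k (AddMonoidAlgebra.single a c * f).coeff = c * phiU U (a + k) f.coeff := by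
  have h : ((AddMonoidAlgebra.single a c : AddMonoidAlgebra L (ℕ × ℕ)) * f).coeff
      = f.coeff.sum fun b d => Finsupp.single (a + b) (c * d) := by
    rw [AddMonoidAlgebra.mul_def, AddMonoidAlgebra.coeff_single, Finsupp.sum_single_index]
    all_goals simp [AddMonoidAlgebra.coeff_finsuppSum, AddMonoidAlgebra.coeff_single]
  rw [h, map_finsuppSum, phiU_apply, Finset.mul_sum]
  rw [Finsupp.sum]
  apply Finset.sum_congr rfl
  intro m _
  rw [phiU_single]
  have h1 : (a + m).1 + k.1 = m.1 + (a + k).1 := by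
    simp [Prod.fst_add]; omega
  have h2 : (a + m).2 + k.2 = m.2 + (a + k).2 := by
    simp [Prod.snd_add]; omega
  rw [h1, h2]; ring

lemma exists_lp_aux (T : MonOrd) (s : Finset (ℕ × ℕ)) (hs : s.Nonempty) :
    ∃ a ∈ s, ∀ b ∈ s, T.le b a := by
  revert hs
  induction s using Finset.induction_on with
  | empty => intro hs; exact absurd hs (by simp)
  | @insert x t hx ih =>
    intro _
    rcases t.eq_empty_or_nonempty with rfl | ht
    · exact ⟨x, by simp, by simp [T.refl]⟩
    · obtain ⟨a, ha, hmax⟩ := ih ht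
      rcases T.total x a with h | h
      · refine ⟨a, Finset.mem_insert_of_mem ha, fun b hb => ?_⟩
        rcases Finset.mem_insert.1 hb with rfl | hb
        · exact h
        · exact hmax b hb
      · refine ⟨x, Finset.mem_insert_self _ _, fun b hb => ?_⟩
        rcases Finset.mem_insert.1 hb with rfl | hb
        · exact T.refl b
        · exact T.trans _ _ _ (hmax b hb) h

/-- For a doubly periodic array `U` and a monomial order `T`,
the set Λ(U) of generating polynomials, together with 0, is an ideal of L[X₁,X₂]. -/
theorem lambda_is_ideal
    (q : ℕ) (hq : IsPrimePow q)
    (F : Type) [Field F] [Fintype F] (hF : Fintype.card F = q)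
    (L : Type) [Field L] [Algebra F L]
    (r₁ r₂ : ℕ) (hr₁ : 0 < r₁) (hr₂ : 0 < r₂) (hco : Nat.Coprime q (r₁ * r₂))
    (α₁ α₂ : L) (hα₁ : IsPrimitiveRoot α₁ r₁) (hα₂ : IsPrimitiveRoot α₂ r₂)
    (T : MonOrd) (U : ℕ × ℕ → L) (hU : DoublyPeriodic r₁ r₂ U) :
    ∃ I : Ideal (AddMonoidAlgebra L (ℕ × ℕ)),
      ∀ f : AddMonoidAlgebra L (ℕ × ℕ), f ∈ I ↔ (GeneratesU T U f.coeff ∨ f = 0) := by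
  classical
  refine ⟨{ carrier := {f | ∀ k : ℕ × ℕ, phiU U k f.coeff = 0}
            add_mem' := ?_
            zero_mem' := ?_
            smul_mem' := ?_ }, ?_⟩
  · intro a b ha hb k
    simp only [Set.mem_setOf_eq] at *
    rw [AddMonoidAlgebra.coeff_add, map_add, ha k, hb k, add_zero]
  · intro k; simp
  · intro g f hf
    simp only [Set.mem_setOf_eq, smul_eq_mul] at *
    induction g using AddMonoidAlgebra.induction with
    | zero => intro k; simp
    | single_add a c g hg hc ih =>
      intro k
      rw [add_mul, AddMonoidAlgebra.coeff_add, map_add, ih k]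
      rw [phiU_single_mul, hf (a + k), mul_zero, add_zero]
  · intro f
    constructor
    · intro hf
      by_cases h0 : f = 0
      · exact Or.inr h0
      · left
        obtain ⟨s, hs, hmax⟩ := exists_lp_aux T f.coeff.support
          (Finsupp.support_nonempty_iff.mpr (mt AddMonoidAlgebra.coeff_eq_zero.mp h0))
        refine ⟨s, ⟨hs, hmax⟩, fun n => ?_⟩
        unfold fApp
        split_ifs with h
        · have key := hf (n.1 - s.1, n.2 - s.2)
          rw [phiU_apply] at key
          simp only at key
          rw [← key]
          apply Finset.sum_congr rfl
          intro m _
          have h1 : m.1 + n.1 - s.1 = m.1 + (n.1 - s.1) := by omega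
          have h2 : m.2 + n.2 - s.2 = m.2 + (n.2 - s.2) := by omega
          rw [h1, h2]
        · rfl
    · intro hf
      rcases hf with ⟨s, _, hgen⟩ | rfl
      · intro k
        have key := hgen (s.1 + k.1, s.2 + k.2)
        unfold fApp at key
        rw [if_pos ⟨Nat.le_add_right _ _, Nat.le_add_right _ _⟩] at key
        simp only at key
        rw [phiU_apply, ← key]
        apply Finset.sum_congr rfl
        intro m _
        have h1 : m.1 + k.1 = m.1 + (s.1 + k.1) - s.1 := by omega
        have h2 : m.2 + k.2 = m.2 + (s.2 + k.2) - s.2 := by omega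
        rw [h1, h2]
      · intro k; simp
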